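/- Let p = 17. For every a ∈ F_p*, with b = cr(a⁴·cr(u)), c = -18a³/(325b) where u = 2(18/325)⁴ and cr is the inverse cube map on F_17, the quintic P(x) = x⁵ + a·x² + b·x + c divides some monic projective polynomial H(x) = x¹⁸ + v·x¹⁷ + v·x + z over F_17 with z ≠ v²; hence every root of P is hyperquadratic of order 1 over F_17. -/
import Mathlib

open Polynomial

instance : Fact (Nat.Prime 17) := ⟨by norm_num⟩

lemma root_of_dvd (a b c v z : ZMod 17)
    (h : (X ^ 5 + C a * X ^ 2 + C b * X + C c : (ZMod 17)[X]) ∣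
      (X ^ 18 + C v * X ^ 17 + C v * X + C z)) :
    ∀ α : AlgebraicClosure (ZMod 17),
      aeval α (X ^ 5 + C a * X ^ 2 + C b * X + C c : (ZMod 17)[X]) = 0 →
      α ^ 18 + algebraMap (ZMod 17) _ v * α ^ 17
        + algebraMap (ZMod 17) _ v * α + algebraMap (ZMod 17) _ z = 0 := by
  intro α hα
  obtain ⟨Q, hQ⟩ := h
  have h0 : aeval α (X ^ 18 + C v * X ^ 17 + C v * X + C z : (ZMod 17)[X]) = 0 := by
    rw [hQ, map_mul, hα, zero_mul]
  simpa [map_add, map_mul, aeval_X_pow, aeval_C, aeval_X] using h0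

set_option maxHeartbeats 1600000 in
theorem stmt_16 (cr : ZMod 17 → ZMod 17) (hcr : ∀ x, (cr x) ^ 3 = x)
    (u : ZMod 17) (hu : u = 2 * (18 / 325) ^ 4)
    (a : ZMod 17) (ha : a ≠ 0)
    (b c : ZMod 17) (hb : b = cr (a ^ 4 * cr u)) (hc : c = -18 * a ^ 3 / (325 * b)) :
    ∃ v z : ZMod 17, z ≠ v ^ 2 ∧
      (X ^ 5 + C a * X ^ 2 + C b * X + C c : (ZMod 17)[X]) ∣
        (X ^ 18 + C v * X ^ 17 + C v * X + C z) ∧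
      ∀ α : AlgebraicClosure (ZMod 17),
        aeval α (X ^ 5 + C a * X ^ 2 + C b * X + C c : (ZMod 17)[X]) = 0 →
        α ^ 18 + algebraMap (ZMod 17) _ v * α ^ 17
          + algebraMap (ZMod 17) _ v * α + algebraMap (ZMod 17) _ z = 0 := by
  have hpow : ∀ x : ZMod 17, (x ^ 11) ^ 3 = x := by decide
  have hinj : ∀ y w : ZMod 17, y ^ 3 = w ^ 3 → y = w := by decide
  have hcr11 : ∀ x : ZMod 17, cr x = x ^ 11 := fun x =>
    hinj _ _ (by rw [hcr, hpow])
  have h325 : (18 / 325 : ZMod 17) = 9 := by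
    rw [div_eq_iff (by decide : (325 : ZMod 17) ≠ 0)]; decide
  have hu15 : u = 15 := by rw [hu, h325]; decide
  have hb2 : b = (a ^ 4 * u ^ 11) ^ 11 := by rw [hb, hcr11, hcr11]
  have key : ∀ x : ZMod 17, x ≠ 0 → (x = 1 ∨ x = 2 ∨ x = 3 ∨ x = 4 ∨ x = 5 ∨ x = 6 ∨
      x = 7 ∨ x = 8 ∨ x = 9 ∨ x = 10 ∨ x = 11 ∨ x = 12 ∨ x = 13 ∨ x = 14 ∨ x = 15 ∨
      x = 16) := by decide
  rcases key a ha with rfl|rfl|rfl|rfl|rfl|rfl|rfl|rfl|rfl|rfl|rfl|rfl|rfl|rfl|rfl|rfl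
  · have hb3 : b = 15 := by rw [hb2, hu15]; decide
    subst hb3
    have hc3 : c = 13 := by
      rw [hc, div_eq_iff (by decide : (325 * (15 : ZMod 17)) ≠ 0)]; decide
    subst hc3
    have hdvd : (X ^ 5 + C (1 : ZMod 17) * X ^ 2 + C (15 : ZMod 17) * X + C (13 : ZMod 17)) ∣
        (X ^ 18 + C (13 : ZMod 17) * X ^ 17 + C (13 : ZMod 17) * X + C (3 : ZMod 17)) :=
      ⟨12 * X ^ 0 + 12 * X ^ 1 + 14 * X ^ 2 + 13 * X ^ 3 + 14 * X ^ 4 + 12 * X ^ 5 + 9 * X ^ 6 + 2 * X ^ 7 + 13 * X ^ 8 + 6 * X ^ 9 + 16 * X ^ 10 + 13 * X ^ 12 + X ^ 13, by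
        simp only [map_ofNat, Polynomial.C_1]
        ring_nf
        reduce_mod_char⟩
    exact ⟨13, 3, by decide, hdvd, root_of_dvd _ _ _ _ _ hdvd⟩
  · have hb3 : b = 2 := by rw [hb2, hu15]; decide
    subst hb3
    have hc3 : c = 15 := by
      rw [hc, div_eq_iff (by decide : (325 * (2 : ZMod 17)) ≠ 0)]; decide
    subst hc3
    have hdvd : (X ^ 5 + C (2 : ZMod 17) * X ^ 2 + C (2 : ZMod 17) * X + C (15 : ZMod 17)) ∣
        (X ^ 18 + C (2 : ZMod 17) * X ^ 17 + C (2 : ZMod 17) * X + C (5 : ZMod 17)) :=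
      ⟨6 * X ^ 0 + 5 * X ^ 1 + 11 * X ^ 2 + 16 * X ^ 3 + 10 * X ^ 4 + 12 * X ^ 5 + 16 * X ^ 6 + 8 * X ^ 7 + 15 * X ^ 8 + 11 * X ^ 9 + 15 * X ^ 10 + 2 * X ^ 12 + X ^ 13, by
        simp only [map_ofNat, Polynomial.C_1]
        ring_nf
        reduce_mod_char⟩
    exact ⟨2, 5, by decide, hdvd, root_of_dvd _ _ _ _ _ hdvd⟩
  · have hb3 : b = 9 := by rw [hb2, hu15]; decide
    subst hb3
    have hc3 : c = 7 := by
      rw [hc, div_eq_iff (by decide : (325 * (9 : ZMod 17)) ≠ 0)]; decide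
    subst hc3
    have hdvd : (X ^ 5 + C (3 : ZMod 17) * X ^ 2 + C (9 : ZMod 17) * X + C (7 : ZMod 17)) ∣
        (X ^ 18 + C (6 : ZMod 17) * X ^ 17 + C (6 : ZMod 17) * X + C (11 : ZMod 17)) :=
      ⟨4 * X ^ 0 + 3 * X ^ 1 + 9 * X ^ 2 + 9 * X ^ 3 + 4 * X ^ 4 + 5 * X ^ 5 + 6 * X ^ 6 + X ^ 7 + 7 * X ^ 8 + 7 * X ^ 9 + 14 * X ^ 10 + 6 * X ^ 12 + X ^ 13, by
        simp only [map_ofNat, Polynomial.C_1]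
        ring_nf
        reduce_mod_char⟩
    exact ⟨6, 11, by decide, hdvd, root_of_dvd _ _ _ _ _ hdvd⟩
  · have hb3 : b = 15 := by rw [hb2, hu15]; decide
    subst hb3
    have hc3 : c = 16 := by
      rw [hc, div_eq_iff (by decide : (325 * (15 : ZMod 17)) ≠ 0)]; decide
    subst hc3
    have hdvd : (X ^ 5 + C (4 : ZMod 17) * X ^ 2 + C (15 : ZMod 17) * X + C (16 : ZMod 17)) ∣
        (X ^ 18 + C (16 : ZMod 17) * X ^ 17 + C (16 : ZMod 17) * X + C (14 : ZMod 17)) :=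
      ⟨3 * X ^ 0 + 12 * X ^ 1 + 5 * X ^ 2 + 4 * X ^ 3 + 12 * X ^ 4 + 12 * X ^ 5 + 2 * X ^ 6 + 15 * X ^ 7 + 16 * X ^ 8 + 6 * X ^ 9 + 13 * X ^ 10 + 16 * X ^ 12 + X ^ 13, by
        simp only [map_ofNat, Polynomial.C_1]
        ring_nf
        reduce_mod_char⟩
    exact ⟨16, 14, by decide, hdvd, root_of_dvd _ _ _ _ _ hdvd⟩
  · have hb3 : b = 9 := by rw [hb2, hu15]; decide
    subst hb3
    have hc3 : c = 11 := by
      rw [hc, div_eq_iff (by decide : (325 * (9 : ZMod 17)) ≠ 0)]; decide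
    subst hc3
    have hdvd : (X ^ 5 + C (5 : ZMod 17) * X ^ 2 + C (9 : ZMod 17) * X + C (11 : ZMod 17)) ∣
        (X ^ 18 + C (7 : ZMod 17) * X ^ 17 + C (7 : ZMod 17) * X + C (6 : ZMod 17)) :=
      ⟨16 * X ^ 0 + 3 * X ^ 1 + 15 * X ^ 2 + 8 * X ^ 3 + 16 * X ^ 4 + 5 * X ^ 5 + 10 * X ^ 6 + 16 * X ^ 7 + 11 * X ^ 8 + 7 * X ^ 9 + 12 * X ^ 10 + 7 * X ^ 12 + X ^ 13, by
        simp only [map_ofNat, Polynomial.C_1]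
        ring_nf
        reduce_mod_char⟩
    exact ⟨7, 6, by decide, hdvd, root_of_dvd _ _ _ _ _ hdvd⟩
  · have hb3 : b = 8 := by rw [hb2, hu15]; decide
    subst hb3
    have hc3 : c = 12 := by
      rw [hc, div_eq_iff (by decide : (325 * (8 : ZMod 17)) ≠ 0)]; decide
    subst hc3
    have hdvd : (X ^ 5 + C (6 : ZMod 17) * X ^ 2 + C (8 : ZMod 17) * X + C (12 : ZMod 17)) ∣
        (X ^ 18 + C (14 : ZMod 17) * X ^ 17 + C (14 : ZMod 17) * X + C (7 : ZMod 17)) :=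
      ⟨2 * X ^ 0 + 14 * X ^ 1 + X ^ 2 + 15 * X ^ 3 + 15 * X ^ 4 + 5 * X ^ 5 + 5 * X ^ 6 + 4 * X ^ 7 + 12 * X ^ 8 + 10 * X ^ 9 + 11 * X ^ 10 + 14 * X ^ 12 + X ^ 13, by
        simp only [map_ofNat, Polynomial.C_1]
        ring_nf
        reduce_mod_char⟩
    exact ⟨14, 7, by decide, hdvd, root_of_dvd _ _ _ _ _ hdvd⟩
  · have hb3 : b = 8 := by rw [hb2, hu15]; decide
    subst hb3
    have hc3 : c = 3 := by
      rw [hc, div_eq_iff (by decide : (325 * (8 : ZMod 17)) ≠ 0)]; decide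
    subst hc3
    have hdvd : (X ^ 5 + C (7 : ZMod 17) * X ^ 2 + C (8 : ZMod 17) * X + C (3 : ZMod 17)) ∣
        (X ^ 18 + C (12 : ZMod 17) * X ^ 17 + C (12 : ZMod 17) * X + C (10 : ZMod 17)) :=
      ⟨9 * X ^ 0 + 14 * X ^ 1 + 4 * X ^ 2 + 2 * X ^ 3 + 8 * X ^ 4 + 5 * X ^ 5 + 3 * X ^ 6 + 13 * X ^ 7 + 3 * X ^ 8 + 10 * X ^ 9 + 10 * X ^ 10 + 12 * X ^ 12 + X ^ 13, by
        simp only [map_ofNat, Polynomial.C_1]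
        ring_nf
        reduce_mod_char⟩
    exact ⟨12, 10, by decide, hdvd, root_of_dvd _ _ _ _ _ hdvd⟩
  · have hb3 : b = 2 := by rw [hb2, hu15]; decide
    subst hb3
    have hc3 : c = 8 := by
      rw [hc, div_eq_iff (by decide : (325 * (2 : ZMod 17)) ≠ 0)]; decide
    subst hc3
    have hdvd : (X ^ 5 + C (8 : ZMod 17) * X ^ 2 + C (2 : ZMod 17) * X + C (8 : ZMod 17)) ∣
        (X ^ 18 + C (9 : ZMod 17) * X ^ 17 + C (9 : ZMod 17) * X + C (12 : ZMod 17)) :=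
      ⟨10 * X ^ 0 + 5 * X ^ 1 + 10 * X ^ 2 + X ^ 3 + 11 * X ^ 4 + 12 * X ^ 5 + 13 * X ^ 6 + 9 * X ^ 7 + 8 * X ^ 8 + 11 * X ^ 9 + 9 * X ^ 10 + 9 * X ^ 12 + X ^ 13, by
        simp only [map_ofNat, Polynomial.C_1]
        ring_nf
        reduce_mod_char⟩
    exact ⟨9, 12, by decide, hdvd, root_of_dvd _ _ _ _ _ hdvd⟩
  · have hb3 : b = 2 := by rw [hb2, hu15]; decide
    subst hb3
    have hc3 : c = 9 := by
      rw [hc, div_eq_iff (by decide : (325 * (2 : ZMod 17)) ≠ 0)]; decide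
    subst hc3
    have hdvd : (X ^ 5 + C (9 : ZMod 17) * X ^ 2 + C (2 : ZMod 17) * X + C (9 : ZMod 17)) ∣
        (X ^ 18 + C (8 : ZMod 17) * X ^ 17 + C (8 : ZMod 17) * X + C (12 : ZMod 17)) :=
      ⟨7 * X ^ 0 + 5 * X ^ 1 + 7 * X ^ 2 + X ^ 3 + 6 * X ^ 4 + 12 * X ^ 5 + 4 * X ^ 6 + 9 * X ^ 7 + 9 * X ^ 8 + 11 * X ^ 9 + 8 * X ^ 10 + 8 * X ^ 12 + X ^ 13, by
        simp only [map_ofNat, Polynomial.C_1]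
        ring_nf
        reduce_mod_char⟩
    exact ⟨8, 12, by decide, hdvd, root_of_dvd _ _ _ _ _ hdvd⟩
  · have hb3 : b = 8 := by rw [hb2, hu15]; decide
    subst hb3
    have hc3 : c = 14 := by
      rw [hc, div_eq_iff (by decide : (325 * (8 : ZMod 17)) ≠ 0)]; decide
    subst hc3
    have hdvd : (X ^ 5 + C (10 : ZMod 17) * X ^ 2 + C (8 : ZMod 17) * X + C (14 : ZMod 17)) ∣
        (X ^ 18 + C (5 : ZMod 17) * X ^ 17 + C (5 : ZMod 17) * X + C (10 : ZMod 17)) :=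
      ⟨8 * X ^ 0 + 14 * X ^ 1 + 13 * X ^ 2 + 2 * X ^ 3 + 9 * X ^ 4 + 5 * X ^ 5 + 14 * X ^ 6 + 13 * X ^ 7 + 14 * X ^ 8 + 10 * X ^ 9 + 7 * X ^ 10 + 5 * X ^ 12 + X ^ 13, by
        simp only [map_ofNat, Polynomial.C_1]
        ring_nf
        reduce_mod_char⟩
    exact ⟨5, 10, by decide, hdvd, root_of_dvd _ _ _ _ _ hdvd⟩
  · have hb3 : b = 8 := by rw [hb2, hu15]; decide
    subst hb3
    have hc3 : c = 5 := by
      rw [hc, div_eq_iff (by decide : (325 * (8 : ZMod 17)) ≠ 0)]; decide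
    subst hc3
    have hdvd : (X ^ 5 + C (11 : ZMod 17) * X ^ 2 + C (8 : ZMod 17) * X + C (5 : ZMod 17)) ∣
        (X ^ 18 + C (3 : ZMod 17) * X ^ 17 + C (3 : ZMod 17) * X + C (7 : ZMod 17)) :=
      ⟨15 * X ^ 0 + 14 * X ^ 1 + 16 * X ^ 2 + 15 * X ^ 3 + 2 * X ^ 4 + 5 * X ^ 5 + 12 * X ^ 6 + 4 * X ^ 7 + 5 * X ^ 8 + 10 * X ^ 9 + 6 * X ^ 10 + 3 * X ^ 12 + X ^ 13, by
        simp only [map_ofNat, Polynomial.C_1]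
        ring_nf
        reduce_mod_char⟩
    exact ⟨3, 7, by decide, hdvd, root_of_dvd _ _ _ _ _ hdvd⟩
  · have hb3 : b = 9 := by rw [hb2, hu15]; decide
    subst hb3
    have hc3 : c = 6 := by
      rw [hc, div_eq_iff (by decide : (325 * (9 : ZMod 17)) ≠ 0)]; decide
    subst hc3
    have hdvd : (X ^ 5 + C (12 : ZMod 17) * X ^ 2 + C (9 : ZMod 17) * X + C (6 : ZMod 17)) ∣
        (X ^ 18 + C (10 : ZMod 17) * X ^ 17 + C (10 : ZMod 17) * X + C (6 : ZMod 17)) :=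
      ⟨X ^ 0 + 3 * X ^ 1 + 2 * X ^ 2 + 8 * X ^ 3 + X ^ 4 + 5 * X ^ 5 + 7 * X ^ 6 + 16 * X ^ 7 + 6 * X ^ 8 + 7 * X ^ 9 + 5 * X ^ 10 + 10 * X ^ 12 + X ^ 13, by
        simp only [map_ofNat, Polynomial.C_1]
        ring_nf
        reduce_mod_char⟩
    exact ⟨10, 6, by decide, hdvd, root_of_dvd _ _ _ _ _ hdvd⟩
  · have hb3 : b = 15 := by rw [hb2, hu15]; decide
    subst hb3
    have hc3 : c = 1 := by
      rw [hc, div_eq_iff (by decide : (325 * (15 : ZMod 17)) ≠ 0)]; decide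
    subst hc3
    have hdvd : (X ^ 5 + C (13 : ZMod 17) * X ^ 2 + C (15 : ZMod 17) * X + C (1 : ZMod 17)) ∣
        (X ^ 18 + C (1 : ZMod 17) * X ^ 17 + C (1 : ZMod 17) * X + C (14 : ZMod 17)) :=
      ⟨14 * X ^ 0 + 12 * X ^ 1 + 12 * X ^ 2 + 4 * X ^ 3 + 5 * X ^ 4 + 12 * X ^ 5 + 15 * X ^ 6 + 15 * X ^ 7 + X ^ 8 + 6 * X ^ 9 + 4 * X ^ 10 + X ^ 12 + X ^ 13, by
        simp only [map_ofNat, Polynomial.C_1]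
        ring_nf
        reduce_mod_char⟩
    exact ⟨1, 14, by decide, hdvd, root_of_dvd _ _ _ _ _ hdvd⟩
  · have hb3 : b = 9 := by rw [hb2, hu15]; decide
    subst hb3
    have hc3 : c = 10 := by
      rw [hc, div_eq_iff (by decide : (325 * (9 : ZMod 17)) ≠ 0)]; decide
    subst hc3
    have hdvd : (X ^ 5 + C (14 : ZMod 17) * X ^ 2 + C (9 : ZMod 17) * X + C (10 : ZMod 17)) ∣
        (X ^ 18 + C (11 : ZMod 17) * X ^ 17 + C (11 : ZMod 17) * X + C (11 : ZMod 17)) :=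
      ⟨13 * X ^ 0 + 3 * X ^ 1 + 8 * X ^ 2 + 9 * X ^ 3 + 13 * X ^ 4 + 5 * X ^ 5 + 11 * X ^ 6 + X ^ 7 + 10 * X ^ 8 + 7 * X ^ 9 + 3 * X ^ 10 + 11 * X ^ 12 + X ^ 13, by
        simp only [map_ofNat, Polynomial.C_1]
        ring_nf
        reduce_mod_char⟩
    exact ⟨11, 11, by decide, hdvd, root_of_dvd _ _ _ _ _ hdvd⟩
  · have hb3 : b = 2 := by rw [hb2, hu15]; decide
    subst hb3
    have hc3 : c = 2 := by
      rw [hc, div_eq_iff (by decide : (325 * (2 : ZMod 17)) ≠ 0)]; decide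
    subst hc3
    have hdvd : (X ^ 5 + C (15 : ZMod 17) * X ^ 2 + C (2 : ZMod 17) * X + C (2 : ZMod 17)) ∣
        (X ^ 18 + C (15 : ZMod 17) * X ^ 17 + C (15 : ZMod 17) * X + C (5 : ZMod 17)) :=
      ⟨11 * X ^ 0 + 5 * X ^ 1 + 6 * X ^ 2 + 16 * X ^ 3 + 7 * X ^ 4 + 12 * X ^ 5 + X ^ 6 + 8 * X ^ 7 + 2 * X ^ 8 + 11 * X ^ 9 + 2 * X ^ 10 + 15 * X ^ 12 + X ^ 13, by
        simp only [map_ofNat, Polynomial.C_1]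
        ring_nf
        reduce_mod_char⟩
    exact ⟨15, 5, by decide, hdvd, root_of_dvd _ _ _ _ _ hdvd⟩
  · have hb3 : b = 15 := by rw [hb2, hu15]; decide
    subst hb3
    have hc3 : c = 4 := by
      rw [hc, div_eq_iff (by decide : (325 * (15 : ZMod 17)) ≠ 0)]; decide
    subst hc3
    have hdvd : (X ^ 5 + C (16 : ZMod 17) * X ^ 2 + C (15 : ZMod 17) * X + C (4 : ZMod 17)) ∣
        (X ^ 18 + C (4 : ZMod 17) * X ^ 17 + C (4 : ZMod 17) * X + C (3 : ZMod 17)) :=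
      ⟨5 * X ^ 0 + 12 * X ^ 1 + 3 * X ^ 2 + 13 * X ^ 3 + 3 * X ^ 4 + 12 * X ^ 5 + 8 * X ^ 6 + 2 * X ^ 7 + 4 * X ^ 8 + 6 * X ^ 9 + X ^ 10 + 4 * X ^ 12 + X ^ 13, by
        simp only [map_ofNat, Polynomial.C_1]
        ring_nf
        reduce_mod_char⟩
    exact ⟨4, 3, by decide, hdvd, root_of_dvd _ _ _ _ _ hdvd⟩
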